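/- arXiv:2109.08686 — 3 statements merged into one kernel-verified Lean document; each statement's English description precedes it below -/
import Mathlib

section
/- For 0 < ν < 1 and a real number y that is not an integer, the symmetric limit lim_{N→∞} ∑_{k=-N, k≠0}^{N} e^{2πikν}/(k+y) equals 2πi · e^{-2πiνy}/(1 - e^{-2πiy}) - 1/y. -/
open Real Filter Complex MeasureTheory Topology

noncomputable def DK (N : ℕ) (t : ℝ) : ℂ :=
  ∑ k ∈ Finset.Icc (-(N : ℤ)) (N : ℤ), Complex.exp (2 * π * k * t * Complex.I)

lemma DK_succ (N : ℕ) (t : ℝ) :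
    DK (N + 1) t = DK N t + Complex.exp (2 * π * (N + 1) * t * Complex.I)
      + Complex.exp (-(2 * π * (N + 1) * t) * Complex.I) := by
  unfold DK
  have h1 : Finset.Icc (-((N:ℤ) + 1)) ((N:ℤ) + 1)
      = insert (-((N:ℤ)+1)) (insert ((N:ℤ)+1) (Finset.Icc (-(N:ℤ)) (N:ℤ))) := by
    ext k; simp [Finset.mem_Icc]; omega
  push_cast
  rw [h1, Finset.sum_insert (by simp only [Finset.mem_insert, Finset.mem_Icc]; omega),
    Finset.sum_insert (by simp only [Finset.mem_insert, Finset.mem_Icc]; omega)]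
  push_cast
  ring_nf

lemma key (u : ℂ) (n : ℕ) :
    Complex.sin ((2*n+1)*u) + Complex.sin u *
      (Complex.exp ((2*(n:ℂ)+2)*u*Complex.I) + Complex.exp (-((2*(n:ℂ)+2)*u)*Complex.I))
    = Complex.sin ((2*n+3)*u) := by
  have ha : Complex.exp (u*Complex.I) ≠ 0 := Complex.exp_ne_zero _
  have hb : Complex.exp ((2*(n:ℂ)+1)*u*Complex.I) ≠ 0 := Complex.exp_ne_zero _
  apply mul_left_cancel₀ (two_ne_zero (α := ℂ))
  rw [mul_add, Complex.two_sin, Complex.two_sin, ← mul_assoc, Complex.two_sin]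
  have h2 : Complex.exp ((2*(n:ℂ)+2)*u*Complex.I)
      = Complex.exp (u*Complex.I) * Complex.exp ((2*(n:ℂ)+1)*u*Complex.I) := by
    rw [← Complex.exp_add]; congr 1; ring
  have h4 : Complex.exp ((2*(n:ℂ)+3)*u*Complex.I)
      = Complex.exp (u*Complex.I) * Complex.exp (u*Complex.I) * Complex.exp ((2*(n:ℂ)+1)*u*Complex.I) := by
    rw [← Complex.exp_add, ← Complex.exp_add]; congr 1; ring
  have h3 : Complex.exp (-((2*(n:ℂ)+2)*u)*Complex.I)
      = (Complex.exp (u*Complex.I) * Complex.exp ((2*(n:ℂ)+1)*u*Complex.I))⁻¹ := by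
    rw [← h2, ← Complex.exp_neg]; congr 1; ring
  have h5 : Complex.exp (-((2*(n:ℂ)+3)*u) * Complex.I)
      = (Complex.exp (u*Complex.I) * Complex.exp (u*Complex.I) * Complex.exp ((2*(n:ℂ)+1)*u*Complex.I))⁻¹ := by
    rw [← h4, ← Complex.exp_neg]; congr 1; ring
  have h6 : Complex.exp (-((2*(n:ℂ)+1)*u) * Complex.I)
      = (Complex.exp ((2*(n:ℂ)+1)*u*Complex.I))⁻¹ := by
    rw [← Complex.exp_neg]; congr 1; ring
  have h7 : Complex.exp (-u * Complex.I) = (Complex.exp (u*Complex.I))⁻¹ := by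
    rw [← Complex.exp_neg]; congr 1; ring
  have e1 : (-((2*(n:ℂ)+1)*u)) = -(2*n+1)*u := by ring
  have e2 : (-((2*(n:ℂ)+3)*u)) = -(2*n+3)*u := by ring
  rw [h2, h3, h4, h5, h6, h7]
  field_simp
  ring

lemma sin_mul_DK (N : ℕ) (t : ℝ) :
    Complex.sin ((π:ℂ)*t) * DK N t = Complex.sin ((2*(N:ℂ)+1)*((π:ℂ)*(t:ℂ))) := by
  induction N with
  | zero =>
    unfold DK
    norm_num
  | succ N ih =>
    rw [DK_succ, mul_add, mul_add, ih]
    have h := key ((π:ℂ)*(t:ℂ)) N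
    push_cast
    ring_nf
    ring_nf at h
    linear_combination h

lemma DK_eq (N : ℕ) {t : ℝ} (h0 : 0 < t) (h1 : t < 1) :
    DK N t = ((Real.sin ((2*(N:ℝ)+1)*(π*t)) / Real.sin (π*t) : ℝ) : ℂ) := by
  have hs : Real.sin (π*t) ≠ 0 := by
    apply ne_of_gt
    apply Real.sin_pos_of_pos_of_lt_pi (by positivity)
    nlinarith [Real.pi_pos]
  have hsC : ((Real.sin (π*t) : ℝ) : ℂ) ≠ 0 := by exact_mod_cast hs
  have h := sin_mul_DK N t
  rw [show ((π:ℂ)*t) = (((π*t : ℝ)):ℂ) by push_cast; ring, ← Complex.ofReal_sin] at h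
  rw [show ((2*(N:ℂ)+1)*(((π*t:ℝ)):ℂ)) = ((((2*N+1)*(π*t) : ℝ)):ℂ) by push_cast; ring,
    ← Complex.ofReal_sin] at h
  rw [Complex.ofReal_div, eq_div_iff hsC]
  rw [mul_comm] at h
  exact h


lemma cont_DK (N : ℕ) : Continuous (DK N) := by
  unfold DK
  exact continuous_finset_sum _ fun k _ => by fun_prop

lemma integral_exp_DK (y c : ℝ) (N : ℕ) (hy : ∀ k : ℤ, (k:ℝ) + y ≠ 0) :
    ∫ t in (0:ℝ)..c, Complex.exp (2*π*y*t*Complex.I) * DK N t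
    = ∑ k ∈ Finset.Icc (-(N:ℤ)) (N:ℤ),
        (Complex.exp (2*π*((k:ℝ)+y)*c*Complex.I) - 1) / (2*π*((k:ℝ)+y)*Complex.I) := by
  unfold DK
  rw [show (fun t : ℝ => Complex.exp (2*π*y*t*Complex.I) *
      ∑ k ∈ Finset.Icc (-(N:ℤ)) (N:ℤ), Complex.exp (2 * π * k * t * Complex.I))
    = (fun t : ℝ => ∑ k ∈ Finset.Icc (-(N:ℤ)) (N:ℤ),
        Complex.exp ((2*π*((k:ℝ)+y)*Complex.I) * t)) by
      funext t
      rw [Finset.mul_sum]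
      exact Finset.sum_congr rfl fun k _ => by
        rw [← Complex.exp_add]; congr 1; push_cast; ring]
  rw [intervalIntegral.integral_finset_sum]
  · apply Finset.sum_congr rfl
    intro k _
    have hk : (2*(π:ℂ)*((k:ℝ)+y)*Complex.I) ≠ 0 := by
      simp only [ne_eq, mul_eq_zero, Complex.I_ne_zero, or_false]
      push_cast
      simp only [ne_eq, mul_eq_zero, OfNat.ofNat_ne_zero, false_or]
      rintro (h | h)
      · exact Real.pi_ne_zero (by exact_mod_cast h)
      · exact hy k (by exact_mod_cast h)
    rw [integral_exp_mul_complex hk]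
    norm_num
    congr 2
    congr 1
    push_cast; ring
  · intro k _
    apply Continuous.intervalIntegrable
    fun_prop

lemma exp_pi_int (k : ℤ) : Complex.exp ((π:ℂ)*(k:ℂ)*Complex.I) = (-1:ℂ)^k := by
  rw [show ((π:ℂ)*(k:ℂ)*Complex.I) = (k:ℂ) * ((π:ℂ)*Complex.I) by ring,
    Complex.exp_int_mul, Complex.exp_pi_mul_I]

lemma integral_DK_half (N : ℕ) : ∫ t in (0:ℝ)..(1/2:ℝ), DK N t = 1/2 := by
  unfold DK
  rw [intervalIntegral.integral_finset_sum (fun k _ => by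
    apply Continuous.intervalIntegrable; fun_prop)]
  have hval : ∀ k : ℤ, k ≠ 0 → ∫ t in (0:ℝ)..(1/2:ℝ), Complex.exp (2 * π * k * t * Complex.I)
      = ((-1:ℂ)^k - 1) / (2*π*(k:ℂ)*Complex.I) := by
    intro k hk
    have hk' : (2*(π:ℂ)*(k:ℂ)*Complex.I) ≠ 0 := by
      simp only [ne_eq, mul_eq_zero, Complex.I_ne_zero, or_false]
      push_cast
      intro h
      rcases h with (h | h)
      · rcases h with (h | h)
        · norm_num at h
        · exact Real.pi_ne_zero (by exact_mod_cast h)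
      · exact hk (by exact_mod_cast h)
    rw [show (fun t : ℝ => Complex.exp (2 * π * k * t * Complex.I))
        = (fun t : ℝ => Complex.exp ((2 * (π:ℂ) * (k:ℂ) * Complex.I) * t)) by
      funext t; congr 1; push_cast; ring]
    rw [integral_exp_mul_complex hk']
    norm_num
    congr 2
    rw [← exp_pi_int k]
    congr 1
    push_cast
    ring
  rw [← Finset.add_sum_erase _ _ (show (0:ℤ) ∈ Finset.Icc (-(N:ℤ)) (N:ℤ) by
    simp [Finset.mem_Icc])]
  have h0 : ∫ t in (0:ℝ)..(1/2:ℝ), Complex.exp (2 * π * (0:ℤ) * t * Complex.I) = 1/2 := by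
    simp
  rw [h0]
  have hz : ∑ k ∈ (Finset.Icc (-(N:ℤ)) (N:ℤ)).erase 0,
      (∫ t in (0:ℝ)..(1/2:ℝ), Complex.exp (2 * π * k * t * Complex.I)) = 0 := by
    apply Finset.sum_involution (fun k _ => -k)
    · intro k hk
      have hk0 : k ≠ 0 := (Finset.mem_erase.mp hk).1
      rw [hval k hk0, hval (-k) (by omega)]
      have h1 : ((-1:ℂ)^(-k)) = (-1:ℂ)^k := by
        rw [zpow_neg]
        rcases Int.even_or_odd k with h | h
        · rw [h.neg_one_zpow]; norm_num
        · rw [Odd.neg_one_zpow h]; norm_num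
      have h2 : (2*(π:ℂ)*((-k : ℤ):ℂ)*Complex.I) = -(2*(π:ℂ)*(k:ℂ)*Complex.I) := by
        push_cast; ring
      rw [h1, h2, div_neg, add_neg_cancel]
    · intro k hk _
      have hk0 : k ≠ 0 := (Finset.mem_erase.mp hk).1
      show ¬ (-k = k)
      omega
    · intro k _
      show -(-k) = k
      omega
    · intro k hk
      have hk' := Finset.mem_erase.mp hk
      simp only [Finset.mem_Icc] at hk'
      show -k ∈ _
      refine Finset.mem_erase.mpr ⟨by omega, ?_⟩
      simp only [Finset.mem_Icc]
      omega
  rw [hz, add_zero]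

lemma RL_exp (G : ℝ → ℂ) (s : ℕ → ℝ) (hs : Tendsto s atTop (cocompact ℝ)) :
    Tendsto (fun N : ℕ => ∫ v : ℝ, Complex.exp (((2 * π * (-(v * s N)) : ℝ) : ℂ) * Complex.I) * G v)
      atTop (𝓝 0) := by
  have base := Real.tendsto_integral_exp_smul_cocompact G
  have comp := base.comp hs
  apply comp.congr
  intro N
  apply MeasureTheory.integral_congr_ae
  filter_upwards with v
  rw [Circle.smul_def, Real.fourierChar_apply, smul_eq_mul]

lemma tendsto_halfseq' : Tendsto (fun N : ℕ => ((2*(N:ℝ)+1)/2)) atTop atTop := by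
  apply tendsto_atTop_mono (f := fun N : ℕ => (N:ℝ))
  · intro N
    rw [le_div_iff₀ (by norm_num : (0:ℝ) < 2)]
    linarith
  · exact tendsto_natCast_atTop_atTop

lemma tendsto_halfseq : Tendsto (fun N : ℕ => ((2*(N:ℝ)+1)/2)) atTop (cocompact ℝ) := by
  rw [cocompact_eq_atBot_atTop]
  exact tendsto_halfseq'.mono_right le_sup_right

lemma RL_sin (G : ℝ → ℂ) (hG : Integrable G) :
    Tendsto (fun N : ℕ => ∫ t : ℝ, G t * ((Real.sin ((2*(N:ℝ)+1)*(π*t)) : ℝ) : ℂ))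
      atTop (𝓝 0) := by
  have hs1 : Tendsto (fun N : ℕ => ((2*(N:ℝ)+1)/2)) atTop (cocompact ℝ) := tendsto_halfseq
  have hs2 : Tendsto (fun N : ℕ => (-((2*(N:ℝ)+1)/2))) atTop (cocompact ℝ) := by
    rw [cocompact_eq_atBot_atTop]
    exact (tendsto_neg_atTop_atBot.comp tendsto_halfseq').mono_right le_sup_left
  have h1 := RL_exp G _ hs1
  have h2 := RL_exp G _ hs2
  have key : ∀ N : ℕ, ∫ t : ℝ, G t * ((Real.sin ((2*(N:ℝ)+1)*(π*t)) : ℝ) : ℂ)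
      = ((∫ v : ℝ, Complex.exp (((2 * π * (-(v * ((2*(N:ℝ)+1)/2))) : ℝ) : ℂ) * Complex.I) * G v)
        - (∫ v : ℝ, Complex.exp (((2 * π * (-(v * (-((2*(N:ℝ)+1)/2)))) : ℝ) : ℂ) * Complex.I) * G v))
        * Complex.I / 2 := by
    intro N
    have hint1 : Integrable (fun v : ℝ => Complex.exp (((2 * π * (-(v * ((2*(N:ℝ)+1)/2))) : ℝ) : ℂ) * Complex.I) * G v) := by
      apply hG.bdd_mul (c := 1)
      · apply Continuous.aestronglyMeasurable; fun_prop
      · exact ae_of_all _ fun v => le_of_eq (Complex.norm_exp_ofReal_mul_I _)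
    have hint2 : Integrable (fun v : ℝ => Complex.exp (((2 * π * (-(v * (-((2*(N:ℝ)+1)/2)))) : ℝ) : ℂ) * Complex.I) * G v) := by
      apply hG.bdd_mul (c := 1)
      · apply Continuous.aestronglyMeasurable; fun_prop
      · exact ae_of_all _ fun v => le_of_eq (Complex.norm_exp_ofReal_mul_I _)
    rw [← MeasureTheory.integral_sub hint1 hint2, ← MeasureTheory.integral_mul_const, ← MeasureTheory.integral_div]
    apply MeasureTheory.integral_congr_ae
    filter_upwards with t
    rw [Complex.ofReal_sin, show ((((2*(N:ℝ)+1)*(π*t)) : ℝ) : ℂ) = ((2*(N:ℝ)+1)*(π*t) : ℂ) by push_cast; ring]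
    have := Complex.two_sin (((2*(N:ℝ)+1) : ℂ)*((π : ℂ)*(t:ℂ)))
    have hsin : Complex.sin (((2*(N:ℝ)+1) : ℂ)*((π : ℂ)*(t:ℂ)))
        = (Complex.exp (-(((2*(N:ℝ)+1) : ℂ)*((π : ℂ)*(t:ℂ))) * Complex.I)
          - Complex.exp ((((2*(N:ℝ)+1) : ℂ)*((π : ℂ)*(t:ℂ))) * Complex.I)) * Complex.I / 2 := by
      field_simp at this ⊢
      linear_combination this
    rw [show ((2*(N:ℝ)+1)*(π*t) : ℂ) = (((2*(N:ℝ)+1) : ℂ)*((π : ℂ)*(t:ℂ))) by push_cast; ring, hsin]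
    rw [show (((2 * π * (-(t * ((2*(N:ℝ)+1)/2))) : ℝ) : ℂ)) = -(((2*(N:ℝ)+1) : ℂ)*((π : ℂ)*(t:ℂ))) by push_cast; ring]
    rw [show (((2 * π * (-(t * (-((2*(N:ℝ)+1)/2)))) : ℝ) : ℂ)) = (((2*(N:ℝ)+1) : ℂ)*((π : ℂ)*(t:ℂ))) by push_cast; ring]
    ring
  simp only [key]
  have := ((h1.sub h2).mul_const Complex.I).div_const 2
  simpa using this

lemma abs_sin_le_abs (u : ℝ) : |Real.sin u| ≤ |u| := by
  have key : ∀ v : ℝ, 0 ≤ v → |Real.sin v| ≤ |v| := by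
    intro v hv
    rw [_root_.abs_of_nonneg hv, abs_le]
    constructor
    · rcases le_total v 1 with h | h
      · have : 0 ≤ Real.sin v := Real.sin_nonneg_of_nonneg_of_le_pi hv
          (by linarith [Real.pi_gt_three])
        linarith
      · linarith [Real.neg_one_le_sin v]
    · exact Real.sin_le hv
  rcases le_total 0 u with h | h
  · exact key u h
  · have := key (-u) (by linarith)
    rwa [Real.sin_neg, abs_neg, abs_neg] at this

lemma abs_exp_I_sub_one (x : ℝ) : ‖Complex.exp ((x:ℂ) * Complex.I) - 1‖ ≤ |x| := by
  have h3 := Complex.two_sin (((x/2 : ℝ)) : ℂ)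
  have hI : Complex.I * Complex.I = -1 := Complex.I_mul_I
  have h5 : (2:ℂ) * Complex.I * Complex.sin (((x/2:ℝ)):ℂ)
      = Complex.exp ((((x/2:ℝ)):ℂ) * Complex.I) - Complex.exp (-(((x/2:ℝ)):ℂ) * Complex.I) := by
    linear_combination Complex.I * h3
      + (Complex.exp (-(((x/2:ℝ)):ℂ) * Complex.I) - Complex.exp ((((x/2:ℝ)):ℂ) * Complex.I)) * hI
  have ha : Complex.exp ((((x/2:ℝ)):ℂ) * Complex.I) * Complex.exp ((((x/2:ℝ)):ℂ) * Complex.I)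
      = Complex.exp ((x:ℂ) * Complex.I) := by
    rw [← Complex.exp_add]; congr 1; push_cast; ring
  have hb : Complex.exp ((((x/2:ℝ)):ℂ) * Complex.I) * Complex.exp (-(((x/2:ℝ)):ℂ) * Complex.I)
      = 1 := by
    rw [← Complex.exp_add, show ((((x/2:ℝ)):ℂ) * Complex.I + -(((x/2:ℝ)):ℂ) * Complex.I) = 0 by ring,
      Complex.exp_zero]
  have hprod : Complex.exp ((x:ℂ) * Complex.I) - 1
      = Complex.exp ((((x/2:ℝ)):ℂ) * Complex.I) * (2 * Complex.I * Complex.sin (((x/2:ℝ)):ℂ)) := by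
    rw [h5]
    linear_combination (-1:ℂ)*ha + hb
  rw [hprod]
  simp only [norm_mul, Complex.norm_exp_ofReal_mul_I, one_mul, Complex.norm_I,
    ← Complex.ofReal_sin, Complex.norm_real, Real.norm_eq_abs, mul_one]
  have h6 := abs_sin_le_abs (x/2)
  rw [abs_div, _root_.abs_two] at h6
  have h9 : ‖(2:ℂ)‖ = 2 := by
    rw [show (2:ℂ) = ((2:ℝ):ℂ) by norm_num, Complex.norm_real, Real.norm_eq_abs]
    norm_num
  rw [h9]
  linarith

noncomputable def GG (y c : ℝ) : ℝ → ℂ := fun t =>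
  (Set.indicator (Set.Ioc 0 c) (fun t : ℝ => Complex.exp (2*π*y*t*Complex.I)) t
    - Set.indicator (Set.Ioc (0:ℝ) (1/2:ℝ)) (fun _ => (1:ℂ)) t) / ((Real.sin (π*t) : ℝ) : ℂ)

lemma GG_integrable (y c : ℝ) (hc0 : 0 < c) (hc1 : c < 1) : Integrable (GG y c) := by
  set M : ℝ := max c (1/2) with hM
  have hM1 : M < 1 := by apply max_lt hc1; norm_num
  have hMc : c ≤ M := le_max_left _ _
  have hMh : (1/2:ℝ) ≤ M := le_max_right _ _
  set C : ℝ := max (π * |y|) (max (1/(2*(1-M))) (1/(2*c))) with hC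
  have hC1 : 1/(2*(1-M)) ≤ C := le_trans (le_max_left _ _) (le_max_right _ _)
  have hC2 : 1/(2*c) ≤ C := le_trans (le_max_right _ _) (le_max_right _ _)
  have hC0 : π * |y| ≤ C := le_max_left _ _
  have hCpos : 0 ≤ C := by
    have : (0:ℝ) < 1/(2*c) := by positivity
    linarith
  apply MeasureTheory.Integrable.mono'
    (g := Set.indicator (Set.Ioc (0:ℝ) M) (fun _ => C))
  · rw [integrable_indicator_iff measurableSet_Ioc]
    exact integrableOn_const measure_Ioc_lt_top.ne
  · apply Measurable.aestronglyMeasurable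
    apply Measurable.div
    · apply Measurable.sub
      · exact Measurable.indicator (by fun_prop) measurableSet_Ioc
      · exact Measurable.indicator (by fun_prop) measurableSet_Ioc
    · fun_prop
  · filter_upwards with t
    have habs : ∀ z : ℂ, ∀ s lo : ℝ, 0 < lo → lo ≤ s → ‖z‖ ≤ 1 →
        ‖z / ((s:ℝ):ℂ)‖ ≤ 1/lo := by
      intro z s lo hlo hs hz
      rw [norm_div, Complex.norm_real, Real.norm_eq_abs,
        _root_.abs_of_nonneg (by linarith : (0:ℝ) ≤ s)]
      apply div_le_div₀ (by positivity) hz hlo hs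
    by_cases h1 : t ∈ Set.Ioc 0 c <;> by_cases h2 : t ∈ Set.Ioc (0:ℝ) (1/2:ℝ)
    · -- both
      have h1' := Set.mem_Ioc.mp h1
      have h2' := Set.mem_Ioc.mp h2
      have ht : t ∈ Set.Ioc (0:ℝ) M := Set.mem_Ioc.mpr ⟨h1'.1, le_trans h1'.2 hMc⟩
      rw [Set.indicator_of_mem ht]
      unfold GG
      rw [Set.indicator_of_mem h1, Set.indicator_of_mem h2]
      have hsin : 2*t ≤ Real.sin (π*t) := by
        have := Real.mul_le_sin (x := π*t) (mul_nonneg Real.pi_pos.le h1'.1.le)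
          (by nlinarith [Real.pi_pos, h2'.2])
        calc 2*t = 2/π*(π*t) := by field_simp
        _ ≤ Real.sin (π*t) := this
      have hnum : ‖Complex.exp (2*π*y*t*Complex.I) - 1‖ ≤ 2*π* |y| *t := by
        have h7 := abs_exp_I_sub_one (2*π*y*t)
        rw [show ((2*π*y*t : ℝ) : ℂ) = 2*(π:ℂ)*(y:ℂ)*(t:ℂ) by push_cast; ring] at h7
        calc ‖Complex.exp (2*π*y*t*Complex.I) - 1‖ ≤ |2*π*y*t| := h7
        _ = 2*π* |y| *t := by
            rw [abs_mul, abs_mul, abs_mul]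
            rw [_root_.abs_of_pos h1'.1, _root_.abs_of_nonneg Real.pi_pos.le]
            norm_num
      rw [norm_div, Complex.norm_real, Real.norm_eq_abs,
        _root_.abs_of_nonneg (by linarith : (0:ℝ) ≤ Real.sin (π*t))]
      calc ‖Complex.exp (2*π*y*t*Complex.I) - 1‖ / Real.sin (π*t)
          ≤ (2*π* |y| *t) / (2*t) := by
            apply div_le_div₀ (mul_nonneg (mul_nonneg (mul_nonneg (by norm_num)
              Real.pi_pos.le) (abs_nonneg y)) h1'.1.le) hnum (by linarith) hsin
        _ = π * |y| := by
            have ht0 : t ≠ 0 := ne_of_gt h1'.1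
            field_simp
        _ ≤ C := hC0
    · -- only in Ioc 0 c, so t > 1/2
      have h1' := Set.mem_Ioc.mp h1
      have ht2 : (1/2:ℝ) < t := by
        by_contra hcon
        exact h2 (Set.mem_Ioc.mpr ⟨h1'.1, le_of_not_gt hcon⟩)
      have ht : t ∈ Set.Ioc (0:ℝ) M := Set.mem_Ioc.mpr ⟨h1'.1, le_trans h1'.2 hMc⟩
      rw [Set.indicator_of_mem ht]
      unfold GG
      rw [Set.indicator_of_mem h1, Set.indicator_of_notMem h2, sub_zero]
      have htM : t ≤ M := le_trans h1'.2 hMc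
      have hsin : 2*(1-M) ≤ Real.sin (π*t) := by
        have harg : Real.sin (π*t) = Real.sin (π*(1-t)) := by
          rw [show π*(1-t) = π - π*t by ring, Real.sin_pi_sub]
        have ha : 0 ≤ π*(1-t) := mul_nonneg Real.pi_pos.le (by nlinarith [htM, hM1])
        have hb : π*(1-t) ≤ π/2 := by nlinarith [Real.pi_pos, ht2]
        have h8 := Real.mul_le_sin ha hb
        rw [harg]
        calc 2*(1-M) ≤ 2*(1-t) := by linarith
        _ = 2/π*(π*(1-t)) := by field_simp
        _ ≤ Real.sin (π*(1-t)) := h8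
      calc ‖Complex.exp (2*π*y*t*Complex.I) / ((Real.sin (π*t) : ℝ):ℂ)‖
          ≤ 1/(2*(1-M)) := by
            apply habs _ _ _ (by linarith) hsin
            rw [show (2*(π:ℂ)*(y:ℂ)*(t:ℂ)*Complex.I) = ((2*π*y*t:ℝ):ℂ)*Complex.I by push_cast; ring,
              Complex.norm_exp_ofReal_mul_I]
        _ ≤ C := hC1
    · -- only in Ioc 0 (1/2), so c < t
      have h2' := Set.mem_Ioc.mp h2
      have htc : c < t := by
        by_contra hcon
        exact h1 (Set.mem_Ioc.mpr ⟨h2'.1, le_of_not_gt hcon⟩)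
      have ht : t ∈ Set.Ioc (0:ℝ) M := Set.mem_Ioc.mpr ⟨h2'.1, le_trans h2'.2 hMh⟩
      rw [Set.indicator_of_mem ht]
      unfold GG
      rw [Set.indicator_of_notMem h1, Set.indicator_of_mem h2, zero_sub]
      have hsin : 2*c ≤ Real.sin (π*t) := by
        have := Real.mul_le_sin (x := π*t) (mul_nonneg Real.pi_pos.le h2'.1.le)
          (by nlinarith [Real.pi_pos, h2'.2])
        calc 2*c ≤ 2*t := by linarith
        _ = 2/π*(π*t) := by field_simp
        _ ≤ Real.sin (π*t) := this
      calc ‖(-1 : ℂ) / ((Real.sin (π*t) : ℝ):ℂ)‖ ≤ 1/(2*c) := by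
            apply habs _ _ _ (by linarith) hsin
            simp
        _ ≤ C := hC2
    · -- neither
      unfold GG
      rw [Set.indicator_of_notMem h1, Set.indicator_of_notMem h2]
      simp only [sub_zero, zero_div, sub_self]
      rw [norm_zero]
      exact Set.indicator_nonneg (fun _ _ => hCpos) t

lemma sin_pi_ne (t : ℝ) (h0 : 0 < t) (h1 : t < 1) : ((Real.sin (π*t) : ℝ) : ℂ) ≠ 0 := by
  have hs : Real.sin (π*t) ≠ 0 := by
    apply ne_of_gt
    apply Real.sin_pos_of_pos_of_lt_pi (by positivity)
    nlinarith [Real.pi_pos]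
  exact_mod_cast hs

lemma GG_key (y c : ℝ) (hc0 : 0 < c) (hc1 : c < 1) (N : ℕ) :
    (∫ t in (0:ℝ)..c, Complex.exp (2*π*y*t*Complex.I) * DK N t)
      - ∫ t in (0:ℝ)..(1/2:ℝ), DK N t
    = ∫ t : ℝ, GG y c t * ((Real.sin ((2*(N:ℝ)+1)*(π*t)) : ℝ) : ℂ) := by
  have m1 : IntegrableOn (fun t : ℝ => Complex.exp (2*π*y*t*Complex.I) * DK N t)
      (Set.Ioc (0:ℝ) c) := by
    apply Continuous.integrableOn_Ioc
    exact (Continuous.mul (by fun_prop) (cont_DK N))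
  have m2 : IntegrableOn (fun t : ℝ => DK N t) (Set.Ioc (0:ℝ) (1/2:ℝ)) :=
    (cont_DK N).integrableOn_Ioc
  rw [intervalIntegral.integral_of_le hc0.le,
    intervalIntegral.integral_of_le (by norm_num : (0:ℝ) ≤ 1/2),
    ← MeasureTheory.integral_indicator measurableSet_Ioc,
    ← MeasureTheory.integral_indicator measurableSet_Ioc,
    ← MeasureTheory.integral_sub ((integrable_indicator_iff measurableSet_Ioc).2 m1)
      ((integrable_indicator_iff measurableSet_Ioc).2 m2)]
  apply MeasureTheory.integral_congr_ae
  filter_upwards with t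
  by_cases h1 : t ∈ Set.Ioc 0 c <;> by_cases h2 : t ∈ Set.Ioc (0:ℝ) (1/2:ℝ) <;>
    unfold GG
  · have h1' := Set.mem_Ioc.mp h1
    rw [Set.indicator_of_mem h1, Set.indicator_of_mem h2,
      Set.indicator_of_mem h1, Set.indicator_of_mem h2,
      DK_eq N h1'.1 (lt_of_le_of_lt h1'.2 hc1)]
    have hz := sin_pi_ne t h1'.1 (lt_of_le_of_lt h1'.2 hc1)
    push_cast
    field_simp
  · have h1' := Set.mem_Ioc.mp h1
    rw [Set.indicator_of_mem h1, Set.indicator_of_notMem h2,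
      Set.indicator_of_mem h1, Set.indicator_of_notMem h2,
      DK_eq N h1'.1 (lt_of_le_of_lt h1'.2 hc1)]
    have hz := sin_pi_ne t h1'.1 (lt_of_le_of_lt h1'.2 hc1)
    push_cast
    field_simp
    ring
  · have h2' := Set.mem_Ioc.mp h2
    rw [Set.indicator_of_notMem h1, Set.indicator_of_mem h2,
      Set.indicator_of_notMem h1, Set.indicator_of_mem h2,
      DK_eq N h2'.1 (lt_of_le_of_lt h2'.2 (by norm_num))]
    have hz := sin_pi_ne t h2'.1 (lt_of_le_of_lt h2'.2 (by norm_num))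
    push_cast
    field_simp
    ring
  · rw [Set.indicator_of_notMem h1, Set.indicator_of_notMem h2,
      Set.indicator_of_notMem h1, Set.indicator_of_notMem h2]
    simp

lemma B1 (y c : ℝ) (hc0 : 0 < c) (hc1 : c < 1) :
    Tendsto (fun N : ℕ => ∫ t in (0:ℝ)..c, Complex.exp (2*π*y*t*Complex.I) * DK N t)
      atTop (𝓝 (1/2)) := by
  have h := RL_sin (GG y c) (GG_integrable y c hc0 hc1)
  have h2 : Tendsto (fun N : ℕ =>
      (∫ t in (0:ℝ)..c, Complex.exp (2*π*y*t*Complex.I) * DK N t) - 1/2) atTop (𝓝 0) := by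
    apply h.congr
    intro N
    rw [← GG_key y c hc0 hc1 N, integral_DK_half]
  exact tendsto_sub_nhds_zero_iff.mp h2

lemma DK_reflect (N : ℕ) (s : ℝ) : DK N (1 - s) = DK N s := by
  unfold DK
  have hterm : ∀ k : ℤ, Complex.exp (2*(π:ℂ)*(k:ℂ)*((1-s:ℝ):ℂ)*Complex.I)
      = Complex.exp (2*(π:ℂ)*((-k : ℤ):ℂ)*(s:ℂ)*Complex.I) := by
    intro k
    rw [show 2*(π:ℂ)*(k:ℂ)*((1-s:ℝ):ℂ)*Complex.I
        = 2*(π:ℂ)*((-k:ℤ):ℂ)*(s:ℂ)*Complex.I + (k:ℂ)*(2*(π:ℂ)*Complex.I) by push_cast; ring,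
      Complex.exp_add, Complex.exp_int_mul_two_pi_mul_I, mul_one]
  calc ∑ k ∈ Finset.Icc (-(N : ℤ)) (N : ℤ), Complex.exp (2 * π * k * (1-s : ℝ) * Complex.I)
      = ∑ k ∈ Finset.Icc (-(N : ℤ)) (N : ℤ), Complex.exp (2 * π * ((-k : ℤ) : ℂ) * s * Complex.I) :=
        Finset.sum_congr rfl fun k _ => hterm k
    _ = ∑ k ∈ Finset.Icc (-(N : ℤ)) (N : ℤ), Complex.exp (2 * π * k * s * Complex.I) := by
        apply Finset.sum_nbij' (i := fun k : ℤ => -k) (j := fun k : ℤ => -k)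
        · intro a ha; simp only [Finset.mem_Icc] at ha ⊢; omega
        · intro a ha; simp only [Finset.mem_Icc] at ha ⊢; omega
        · intro a _; omega
        · intro a _; omega
        · intro a _; norm_num


lemma frac (a d : ℂ) (hd : d ≠ 0) :
    2*(π:ℂ)*Complex.I * (a / (2*(π:ℂ)*d*Complex.I)) = a / d := by
  have h1 : (π:ℂ) ≠ 0 := Complex.ofReal_ne_zero.mpr Real.pi_ne_zero
  field_simp

set_option maxHeartbeats 1000000 in
lemma B2 (y : ℝ) :
    Tendsto (fun N : ℕ => ∫ t in (1/2:ℝ)..1, Complex.exp (2*π*y*t*Complex.I) * DK N t)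
      atTop (𝓝 (Complex.exp (2*(π:ℂ)*(y:ℂ)*Complex.I)/2)) := by
  have heq : ∀ N : ℕ, ∫ t in (1/2:ℝ)..1, Complex.exp (2*π*y*t*Complex.I) * DK N t
      = Complex.exp (2*(π:ℂ)*(y:ℂ)*Complex.I)
        * ∫ s in (0:ℝ)..(1/2:ℝ), Complex.exp (2*π*(-y)*s*Complex.I) * DK N s := by
    intro N
    have h := intervalIntegral.integral_comp_sub_left (a := (0:ℝ)) (b := (1/2:ℝ))
      (fun t => Complex.exp (2*π*y*t*Complex.I) * DK N t) 1
    rw [show (1:ℝ) - 1/2 = 1/2 by norm_num, show (1:ℝ) - 0 = 1 by norm_num] at h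
    rw [← h, ← intervalIntegral.integral_const_mul]
    apply intervalIntegral.integral_congr
    intro s _
    simp only
    rw [DK_reflect N s, ← mul_assoc]
    congr 1
    rw [← Complex.exp_add]
    congr 1
    push_cast
    ring
  have h2 := (B1 (-y) (1/2) (by norm_num) (by norm_num)).const_mul
    (Complex.exp (2*(π:ℂ)*(y:ℂ)*Complex.I))
  simp only [Complex.ofReal_neg] at h2
  have h3 := h2.congr (fun N => (heq N).symm)
  rw [show Complex.exp (2*(π:ℂ)*(y:ℂ)*Complex.I) * (1/2)
    = Complex.exp (2*(π:ℂ)*(y:ℂ)*Complex.I)/2 by ring] at h3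
  exact h3

theorem stmt_5 (ν y : ℝ) (h0 : 0 < ν) (h1 : ν < 1) (hy : ∀ n : ℤ, y ≠ (n : ℝ)) :
    Tendsto (fun N : ℕ => ∑ k ∈ Finset.Icc (-(N : ℤ)) (N : ℤ) \ {0},
        Complex.exp (2 * π * Complex.I * (k : ℂ) * (ν : ℂ)) / ((k : ℂ) + (y : ℂ)))
      atTop
      (nhds (2 * π * Complex.I * Complex.exp (-(2 * π * Complex.I * (ν : ℂ) * (y : ℂ)))
          / (1 - Complex.exp (-(2 * π * Complex.I * (y : ℂ)))) - 1 / (y : ℂ))) := by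
  -- basic nonvanishing facts
  have hky : ∀ k : ℤ, (k:ℝ) + y ≠ 0 := by
    intro k h
    exact hy (-k) (by push_cast; linarith)
  have hkyC : ∀ k : ℤ, ((k:ℂ)) + (y:ℂ) ≠ 0 := by
    intro k h
    apply hky k
    have h2 : (((k:ℝ) + y : ℝ) : ℂ) = 0 := by push_cast; exact_mod_cast h
    exact_mod_cast h2
  have hy0 : (y:ℂ) ≠ 0 := by
    intro h
    exact hy 0 (by exact_mod_cast congrArg Complex.re h)
  have hpiI : (2*(π:ℂ)*Complex.I) ≠ 0 := by
    simp [Real.pi_ne_zero, Complex.I_ne_zero]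
  set Ey : ℂ := Complex.exp (2*(π:ℂ)*(y:ℂ)*Complex.I) with hEy
  set Eyν : ℂ := Complex.exp (2*(π:ℂ)*(y:ℂ)*(ν:ℂ)*Complex.I) with hEyν
  have hEy1 : Ey ≠ 1 := by
    rw [hEy]
    intro h
    obtain ⟨n, hn⟩ := Complex.exp_eq_one_iff.mp h
    have h2 : (y:ℂ) * (2*(π:ℂ)*Complex.I) = (n:ℂ) * (2*(π:ℂ)*Complex.I) := by
      linear_combination hn
    have h3 := mul_right_cancel₀ hpiI h2
    exact hy n (by exact_mod_cast h3)
  have hEyne : Ey - 1 ≠ 0 := sub_ne_zero.mpr hEy1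
  have hEy0 : Ey ≠ 0 := Complex.exp_ne_zero _
  have hEyν0 : Eyν ≠ 0 := Complex.exp_ne_zero _
  -- the two sums
  set A : ℕ → ℂ := fun N => ∑ k ∈ Finset.Icc (-(N:ℤ)) (N:ℤ), 1/((k:ℂ)+(y:ℂ)) with hA
  set S : ℕ → ℂ := fun N => ∑ k ∈ Finset.Icc (-(N:ℤ)) (N:ℤ),
    Complex.exp (2*(π:ℂ)*(k:ℂ)*(ν:ℂ)*Complex.I)/((k:ℂ)+(y:ℂ)) with hS
  -- key identities
  have key1 : ∀ N : ℕ, Ey * A N - A N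
      = 2*(π:ℂ)*Complex.I * ∫ t in (0:ℝ)..1, Complex.exp (2*π*y*t*Complex.I) * DK N t := by
    intro N
    rw [integral_exp_DK y 1 N hky]
    simp only [hA]
    rw [Finset.mul_sum, ← Finset.sum_sub_distrib, Finset.mul_sum]
    apply Finset.sum_congr rfl
    intro k _
    have he : Complex.exp (2*π*((k:ℝ)+y)*(1:ℝ)*Complex.I)
        = Complex.exp ((k:ℂ)*(2*(π:ℂ)*Complex.I)) * Ey := by
      rw [hEy, ← Complex.exp_add]; congr 1; push_cast; ring
    rw [he, Complex.exp_int_mul_two_pi_mul_I, one_mul]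
    have hk := hkyC k
    push_cast
    rw [frac _ _ hk, mul_one_div, div_sub_div_same]
  have keyν : ∀ N : ℕ, Eyν * S N - A N
      = 2*(π:ℂ)*Complex.I * ∫ t in (0:ℝ)..ν, Complex.exp (2*π*y*t*Complex.I) * DK N t := by
    intro N
    rw [integral_exp_DK y ν N hky]
    simp only [hA, hS]
    rw [Finset.mul_sum, ← Finset.sum_sub_distrib, Finset.mul_sum]
    apply Finset.sum_congr rfl
    intro k _
    have he : Complex.exp (2*π*((k:ℝ)+y)*(ν:ℝ)*Complex.I)
        = Complex.exp (2*(π:ℂ)*(k:ℂ)*(ν:ℂ)*Complex.I) * Eyν := by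
      rw [hEyν, ← Complex.exp_add]; congr 1; push_cast; ring
    rw [he]
    have hk := hkyC k
    push_cast
    rw [frac _ _ hk, mul_div_assoc', div_sub_div_same]
    congr 1
    ring
  -- limit of the full integral over [0,1]
  have hint1 : Tendsto (fun N : ℕ => ∫ t in (0:ℝ)..1, Complex.exp (2*π*y*t*Complex.I) * DK N t)
      atTop (𝓝 (1/2 + Ey/2)) := by
    have hsplit : ∀ N : ℕ, ∫ t in (0:ℝ)..1, Complex.exp (2*π*y*t*Complex.I) * DK N t
        = (∫ t in (0:ℝ)..(1/2:ℝ), Complex.exp (2*π*y*t*Complex.I) * DK N t)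
          + ∫ t in (1/2:ℝ)..1, Complex.exp (2*π*y*t*Complex.I) * DK N t := by
      intro N
      rw [intervalIntegral.integral_add_adjacent_intervals]
      · exact Continuous.intervalIntegrable (by exact (Continuous.mul (by fun_prop) (cont_DK N))) _ _
      · exact Continuous.intervalIntegrable (by exact (Continuous.mul (by fun_prop) (cont_DK N))) _ _
    have := (B1 y (1/2) (by norm_num) (by norm_num)).add (B2 y)
    exact (this.congr (fun N => (hsplit N).symm))
  -- limit of A
  set LA : ℂ := 2*(π:ℂ)*Complex.I * (1/2 + Ey/2) / (Ey - 1) with hLA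
  have hAlim : Tendsto A atTop (𝓝 LA) := by
    have hAeq : ∀ N : ℕ, A N = (2*(π:ℂ)*Complex.I
        * ∫ t in (0:ℝ)..1, Complex.exp (2*π*y*t*Complex.I) * DK N t) / (Ey - 1) := by
      intro N
      rw [eq_div_iff hEyne]
      linear_combination key1 N
    have := ((hint1.const_mul (2*(π:ℂ)*Complex.I)).div_const (Ey - 1)).congr
      (fun N => (hAeq N).symm)
    exact this
  -- limit of S
  have hSlim : Tendsto S atTop (𝓝 ((2*(π:ℂ)*Complex.I * (1/2) + LA) / Eyν)) := by
    have hSeq : ∀ N : ℕ, S N = (2*(π:ℂ)*Complex.I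
        * (∫ t in (0:ℝ)..ν, Complex.exp (2*π*y*t*Complex.I) * DK N t) + A N) / Eyν := by
      intro N
      rw [eq_div_iff hEyν0]
      linear_combination keyν N
    have h2 := (((B1 y ν h0 h1).const_mul (2*(π:ℂ)*Complex.I)).add hAlim).div_const Eyν
    exact (h2.congr (fun N => (hSeq N).symm))
  -- the statement sum equals S N - 1/y
  have hsum : ∀ N : ℕ, (∑ k ∈ Finset.Icc (-(N : ℤ)) (N : ℤ) \ {0},
      Complex.exp (2 * π * Complex.I * (k : ℂ) * (ν : ℂ)) / ((k : ℂ) + (y : ℂ)))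
      = S N - 1/(y:ℂ) := by
    intro N
    have hmem : (0:ℤ) ∈ Finset.Icc (-(N:ℤ)) (N:ℤ) := by simp [Finset.mem_Icc]
    have hdiff : Finset.Icc (-(N : ℤ)) (N : ℤ) \ {0}
        = (Finset.Icc (-(N:ℤ)) (N:ℤ)).erase 0 := by
      ext k; simp [Finset.mem_erase, and_comm]
    have h00 : Complex.exp (2*(π:ℂ)*((0:ℤ):ℂ)*(ν:ℂ)*Complex.I)/(((0:ℤ):ℂ)+(y:ℂ)) = 1/(y:ℂ) := by
      norm_num
    have hcongr : ∑ k ∈ (Finset.Icc (-(N:ℤ)) (N:ℤ)).erase 0,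
        Complex.exp (2 * π * Complex.I * (k : ℂ) * (ν : ℂ)) / ((k : ℂ) + (y : ℂ))
        = ∑ k ∈ (Finset.Icc (-(N:ℤ)) (N:ℤ)).erase 0,
        Complex.exp (2*(π:ℂ)*(k:ℂ)*(ν:ℂ)*Complex.I)/((k:ℂ)+(y:ℂ)) := by
      apply Finset.sum_congr rfl
      intro k _
      congr 2
      ring
    rw [hdiff, hcongr]
    simp only [hS]
    rw [← Finset.add_sum_erase _ (fun k : ℤ =>
      Complex.exp (2*(π:ℂ)*(k:ℂ)*(ν:ℂ)*Complex.I)/((k:ℂ)+(y:ℂ))) hmem, h00]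
    ring
  -- final limit identification
  have hfinal : (2*(π:ℂ)*Complex.I * (1/2) + LA) / Eyν - 1/(y:ℂ)
      = 2 * π * Complex.I * Complex.exp (-(2 * π * Complex.I * (ν : ℂ) * (y : ℂ)))
          / (1 - Complex.exp (-(2 * π * Complex.I * (y : ℂ)))) - 1 / (y : ℂ) := by
    have he1 : Complex.exp (-(2 * π * Complex.I * (ν : ℂ) * (y : ℂ))) = Eyν⁻¹ := by
      rw [hEyν, ← Complex.exp_neg]; congr 1; ring
    have he2 : Complex.exp (-(2 * π * Complex.I * (y : ℂ))) = Ey⁻¹ := by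
      rw [hEy, ← Complex.exp_neg]; congr 1; ring
    rw [he1, he2, hLA]
    congr 1
    have hden : 1 - Ey⁻¹ ≠ 0 := by
      rw [sub_ne_zero]
      intro h
      exact hEy1 (by rw [← inv_inv Ey, ← h, inv_one])
    field_simp
    ring
  rw [← hfinal]
  exact (hSlim.sub_const (1/(y:ℂ))).congr (fun N => (hsum N).symm)
end

section
/- The series ∑_{k=2}^∞ log(4(k²-1)/(4k²-1)) converges and equals log(3π/16). -/
open Real Filter Finset Topology

private noncomputable def stmtP (n : ℕ) : ℝ :=
  ∏ k ∈ range n, 4 * (((k : ℝ) + 2) ^ 2 - 1) / (4 * ((k : ℝ) + 2) ^ 2 - 1)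

private lemma stmt_term_pos (k : ℕ) :
    0 < 4 * (((k : ℝ) + 2) ^ 2 - 1) / (4 * ((k : ℝ) + 2) ^ 2 - 1) := by
  have hk : (0:ℝ) ≤ (k : ℝ) := Nat.cast_nonneg k
  have h1 : (0:ℝ) < 4 * (((k : ℝ) + 2) ^ 2 - 1) := by nlinarith
  have h2 : (0:ℝ) < 4 * ((k : ℝ) + 2) ^ 2 - 1 := by nlinarith
  exact div_pos h1 h2

private lemma stmtP_eq (n : ℕ) :
    stmtP n = 3 / 4 * Real.Wallis.W (n + 1) * (((n : ℝ) + 2) / (2 * ((n : ℝ) + 1))) := by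
  induction n with
  | zero =>
    simp [stmtP, Real.Wallis.W]
    norm_num
  | succ n ih =>
    have hW := Real.Wallis.W_succ (n + 1)
    rw [stmtP, prod_range_succ, ← stmtP, ih, hW]
    have hn : (0:ℝ) ≤ (n : ℝ) := Nat.cast_nonneg n
    have h1 : (0:ℝ) < 4 * ((n : ℝ) + 2) ^ 2 - 1 := by nlinarith
    have h2 : (0:ℝ) < (n:ℝ) + 1 := by positivity
    have h3 : (0:ℝ) < 2 * ((n:ℝ)+1) + 1 := by positivity
    have h4 : (0:ℝ) < 2 * ((n:ℝ)+1) + 3 := by positivity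
    have h5 : (0:ℝ) < (n:ℝ) + 2 := by positivity
    push_cast
    field_simp
    ring

private lemma stmtP_tendsto :
    Tendsto stmtP atTop (𝓝 (3 * π / 16)) := by
  have hW : Tendsto (fun n : ℕ => Real.Wallis.W (n + 1)) atTop (𝓝 (π / 2)) :=
    Real.Wallis.tendsto_W_nhds_pi_div_two.comp (tendsto_add_atTop_nat 1)
  have hfrac : Tendsto (fun n : ℕ => ((n : ℝ) + 2) / (2 * ((n : ℝ) + 1))) atTop (𝓝 (1 / 2)) := by
    have heq : ∀ n : ℕ, ((n : ℝ) + 2) / (2 * ((n : ℝ) + 1))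
        = 1 / 2 + 1 / 2 * (1 / ((n : ℝ) + 1)) := by
      intro n
      have : ((n:ℝ) + 1) ≠ 0 := by positivity
      field_simp
      ring
    simp_rw [heq]
    have : Tendsto (fun n : ℕ => 1 / ((n : ℝ) + 1)) atTop (𝓝 0) := tendsto_one_div_add_atTop_nhds_zero_nat
    have h2 : Tendsto (fun n : ℕ => 1 / 2 * (1 / ((n : ℝ) + 1))) atTop (𝓝 0) := by
      simpa using this.const_mul (1/2 : ℝ)
    simpa using (tendsto_const_nhds (x := (1/2 : ℝ)) (f := atTop)).add h2
  have h := ((tendsto_const_nhds (x := (3/4 : ℝ)) (f := atTop)).mul hW).mul hfrac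
  have : (3/4 : ℝ) * (π / 2) * (1 / 2) = 3 * π / 16 := by ring
  rw [this] at h
  exact h.congr fun n => (stmtP_eq n).symm

private lemma stmt_sum_eq (n : ℕ) :
    ∑ k ∈ range n, Real.log (4 * (((k : ℝ) + 2) ^ 2 - 1) / (4 * ((k : ℝ) + 2) ^ 2 - 1))
      = Real.log (stmtP n) := by
  rw [stmtP, Real.log_prod]
  exact fun k _ => (stmt_term_pos k).ne'

private lemma stmt_tendsto_sum :
    Tendsto (fun n => ∑ k ∈ range n,
        Real.log (4 * (((k : ℝ) + 2) ^ 2 - 1) / (4 * ((k : ℝ) + 2) ^ 2 - 1)))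
      atTop (𝓝 (Real.log (3 * π / 16))) := by
  have hpos : (0:ℝ) < 3 * π / 16 := by positivity
  have hcont := (Real.continuousAt_log hpos.ne').tendsto.comp stmtP_tendsto
  exact hcont.congr fun n => (stmt_sum_eq n).symm

theorem stmt_11 :
    HasSum (fun k : ℕ => Real.log (4 * (((k : ℝ) + 2) ^ 2 - 1) / (4 * ((k : ℝ) + 2) ^ 2 - 1)))
      (Real.log (3 * π / 16)) := by
  set f : ℕ → ℝ := fun k => Real.log (4 * (((k : ℝ) + 2) ^ 2 - 1) / (4 * ((k : ℝ) + 2) ^ 2 - 1))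
    with hf
  have hfle : ∀ k, f k ≤ 0 := by
    intro k
    apply Real.log_nonpos (stmt_term_pos k).le
    have hk : (0:ℝ) ≤ (k : ℝ) := Nat.cast_nonneg k
    have h2 : (0:ℝ) < 4 * ((k : ℝ) + 2) ^ 2 - 1 := by nlinarith
    rw [div_le_one h2]
    nlinarith
  have hg : ∀ k, 0 ≤ -f k := fun k => neg_nonneg.2 (hfle k)
  have hmono : Monotone (fun n => ∑ k ∈ range n, -f k) := fun a b hab =>
    Finset.sum_le_sum_of_subset_of_nonneg (Finset.range_subset_range.2 hab) fun i _ _ => hg i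
  have htg : Tendsto (fun n => ∑ k ∈ range n, -f k) atTop (𝓝 (-Real.log (3 * π / 16))) := by
    have := stmt_tendsto_sum.neg
    simpa [Finset.sum_neg_distrib] using this
  have hbound : ∀ n, ∑ k ∈ range n, -f k ≤ -Real.log (3 * π / 16) := fun n =>
    hmono.ge_of_tendsto htg n
  have hsumg : Summable (fun k => -f k) := summable_of_sum_range_le hg hbound
  have hsum : Summable f := by simpa using hsumg.neg
  exact (hsum.hasSum_iff_tendsto_nat).2 stmt_tendsto_sum
end

section
/- The series ∑_{k=2}^∞ log((4k²-1)²/(16k²(k²-1))) converges and equals log(128/(9π²)). -/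
open Real Filter Finset Topology

noncomputable def Wseq (N : ℕ) : ℝ :=
  ∏ i ∈ Finset.range N, ((2 : ℝ) * i + 2) / (2 * i + 1) * ((2 * i + 2) / (2 * i + 3))

lemma Wseq_pos (N : ℕ) : 0 < Wseq N := by
  apply Finset.prod_pos
  intro i _
  positivity

noncomputable def gterm (k : ℕ) : ℝ :=
  (4 * ((k : ℝ) + 2) ^ 2 - 1) ^ 2 / (16 * ((k : ℝ) + 2) ^ 2 * (((k : ℝ) + 2) ^ 2 - 1))

lemma gterm_one_lt (k : ℕ) : 1 < gterm k := by
  unfold gterm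
  have hk : (0:ℝ) ≤ (k:ℝ) := Nat.cast_nonneg k
  have h2 : (3:ℝ) ≤ ((k:ℝ)+2)^2 - 1 := by nlinarith
  rw [lt_div_iff₀ (by nlinarith)]
  nlinarith

lemma gterm_pos (k : ℕ) : 0 < gterm k := lt_trans one_pos (gterm_one_lt k)

lemma prod_gterm (N : ℕ) :
    ∏ k ∈ Finset.range N, gterm k
      = 32 * ((N:ℝ)+1) / (9 * ((N:ℝ)+2) * (Wseq (N+1))^2) := by
  induction N with
  | zero =>
    simp [Wseq, Finset.prod_range_succ]
    norm_num
  | succ n ih =>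
    rw [Finset.prod_range_succ, ih]
    have hW : Wseq (n+2) = Wseq (n+1) *
        (((2:ℝ) * (n+1:ℕ) + 2) / (2 * (n+1:ℕ) + 1) * ((2 * (n+1:ℕ) + 2) / (2 * (n+1:ℕ) + 3))) :=
      Finset.prod_range_succ _ _
    have hWpos := Wseq_pos (n+1)
    have hk : (0:ℝ) ≤ (n:ℝ) := Nat.cast_nonneg n
    unfold gterm
    push_cast
    push_cast at hW
    rw [hW]
    have h1 : (2:ℝ)*(n:ℝ)+3 ≠ 0 := by nlinarith
    have h2 : (2:ℝ)*(n:ℝ)+5 ≠ 0 := by nlinarith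
    have h3 : ((n:ℝ)+2) ≠ 0 := by nlinarith
    have h4 : ((n:ℝ)+3) ≠ 0 := by nlinarith
    have h5 : ((n:ℝ)+1) ≠ 0 := by nlinarith
    have h6 : ((n:ℝ)+2)^2 - 1 ≠ 0 := by nlinarith
    field_simp
    ring

theorem stmt_12 :
    HasSum (fun k : ℕ =>
        Real.log ((4 * ((k : ℝ) + 2) ^ 2 - 1) ^ 2 / (16 * ((k : ℝ) + 2) ^ 2 * (((k : ℝ) + 2) ^ 2 - 1))))
      (Real.log (128 / (9 * π ^ 2))) := by
  have hpi := Real.pi_pos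
  have hnonneg : ∀ k : ℕ, 0 ≤ Real.log (gterm k) := fun k =>
    Real.log_nonneg (gterm_one_lt k).le
  refine (hasSum_iff_tendsto_nat_of_nonneg hnonneg _).mpr ?_
  have hsum : ∀ n : ℕ, ∑ k ∈ Finset.range n,
      Real.log (gterm k) = Real.log (32 * ((n:ℝ)+1) / (9 * ((n:ℝ)+2) * (Wseq (n+1))^2)) := by
    intro n
    rw [← prod_gterm, Real.log_prod (fun k _ => (gterm_pos k).ne')]
  simp only [hsum]
  -- limit of the closed form
  have hW : Tendsto (fun n : ℕ => Wseq (n+1)) atTop (𝓝 (π/2)) :=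
    Real.tendsto_prod_pi_div_two.comp (tendsto_add_atTop_nat 1)
  have hWsq : Tendsto (fun n : ℕ => (Wseq (n+1))^2) atTop (𝓝 ((π/2)^2)) := hW.pow 2
  have hinv : Tendsto (fun n : ℕ => ((Wseq (n+1))^2)⁻¹) atTop (𝓝 (((π/2)^2)⁻¹)) :=
    hWsq.inv₀ (by positivity)
  have ht : Tendsto (fun n : ℕ => ((n:ℝ)+1)/((n:ℝ)+2)) atTop (𝓝 1) := by
    have h0 : Tendsto (fun n : ℕ => 1/((n:ℝ)+2)) atTop (𝓝 0) := by
      have := (tendsto_one_div_add_atTop_nhds_zero_nat (𝕜 := ℝ)).comp (tendsto_add_atTop_nat 1)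
      convert this using 2 with n
      simp [Function.comp]
      push_cast
      ring
    have := tendsto_const_nhds.sub h0 (a := (1:ℝ))
    simp only [sub_zero] at this
    convert this using 2 with n
    have h3 : ((n:ℝ)+2) ≠ 0 := by positivity
    field_simp
    ring
  have hT : Tendsto (fun n : ℕ => 32 * ((n:ℝ)+1) / (9 * ((n:ℝ)+2) * (Wseq (n+1))^2))
      atTop (𝓝 (128 / (9 * π^2))) := by
    have := ((ht.const_mul (32/9 : ℝ)).mul hinv)
    have heq : (32/9 : ℝ) * 1 * ((π/2)^2)⁻¹ = 128 / (9 * π^2) := by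
      field_simp
      ring
    rw [heq] at this
    convert this using 2 with n
    have h3 : ((n:ℝ)+2) ≠ 0 := by positivity
    have h4 : (Wseq (n+1)) ≠ 0 := (Wseq_pos _).ne'
    field_simp
  have hlog : Tendsto Real.log (𝓝 (128 / (9 * π^2))) (𝓝 (Real.log (128 / (9 * π^2)))) :=
    (Real.continuousAt_log (by positivity)).tendsto
  exact hlog.comp hT
end
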